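/- Assume |a_j| = 1 for all j. The subspace Q_κ is dense in Q_{κ,C} with respect to the Hermitian product ⟨·,·⟩_L: if P ∈ Q_{κ,C} satisfies ⟨P,Q⟩_L = 0 for every Q ∈ Q_κ (with any admissible μ), then P = 0. -/

import Mathlib

/-- The derivation `D = z·d/dz` on Laurent polynomials: `D(z^m) = m·z^m`. -/
noncomputable def Dop (P : LaurentPolynomial ℂ) : LaurentPolynomial ℂ :=
  Finsupp.sum (AddMonoidAlgebra.coeff P) fun m c => LaurentPolynomial.C ((m : ℂ) * c) * LaurentPolynomial.T m

/-- `Φ_k(a;z) = a·z^k + a⁻¹·z^{−k}`. -/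
noncomputable def PhiL (k : ℕ) (a : ℂ) : LaurentPolynomial ℂ :=
  LaurentPolynomial.C a * LaurentPolynomial.T (k : ℤ) +
    LaurentPolynomial.C a⁻¹ * LaurentPolynomial.T (-(k : ℤ))

/-- `W_{κ,a}`: the determinant of the `n×n` matrix with `(i,j)` entry `D^{i−1}Φ_{k_j}(a_j;z)`. -/
noncomputable def Wka (n : ℕ) (k : Fin n → ℕ) (a : Fin n → ℂ) : LaurentPolynomial ℂ :=
  Matrix.det (Matrix.of fun i j : Fin n => Dop^[(i : ℕ)] (PhiL (k j) (a j)))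

/-- The exceptional Laurent orthogonal polynomial `P_{κ,a;l}`: the determinant of the
`(n+1)×(n+1)` matrix with `(i,j)` entry `D^{i−1}Φ_{k_j}(a_j;z)` for `j ≤ n` and
`D^{i−1}z^l` in the last column. -/
noncomputable def Pka (n : ℕ) (k : Fin n → ℕ) (a : Fin n → ℂ) (l : ℤ) : LaurentPolynomial ℂ :=
  Matrix.det (Matrix.of fun i j : Fin (n + 1) =>
    Fin.lastCases (Dop^[(i : ℕ)] (LaurentPolynomial.T l))
      (fun j' => Dop^[(i : ℕ)] (PhiL (k j') (a j'))) j)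

/-- Evaluation of a Laurent polynomial at `z ∈ ℂ`. -/
noncomputable def evalL (P : LaurentPolynomial ℂ) (z : ℂ) : ℂ :=
  Finsupp.sum (AddMonoidAlgebra.coeff P) fun m c => c * z ^ m

/-- The dagger operation: `(Σ c_m z^m)† = Σ conj(c_m)·z^{−m}`. -/
noncomputable def dag (P : LaurentPolynomial ℂ) : LaurentPolynomial ℂ :=
  Finsupp.sum (AddMonoidAlgebra.coeff P) fun m c => LaurentPolynomial.C ((starRingEnd ℂ) c) * LaurentPolynomial.T (-m)

/-- The set `Z_κ` of zeros of `W_{κ,a}` in `ℂ\{0}`. -/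
def Zka (n : ℕ) (k : Fin n → ℕ) (a : Fin n → ℂ) : Set ℂ :=
  {z | z ≠ 0 ∧ evalL (Wka n k a) z = 0}

/-- The multiplicity of `z₀ ≠ 0` as a zero of the Laurent polynomial `W`, computed as the
root multiplicity of `z₀` in a polynomial representative `f'` with `toLaurent f' = W · T^d`. -/
noncomputable def multL (W : LaurentPolynomial ℂ) (z₀ : ℂ) : ℕ :=
  Polynomial.rootMultiplicity z₀ (W.exists_T_pow).choose_spec.choose

/-- `ψ` is quasi-invariant at `x₀` with multiplicity `m`: `(x−x₀)^m·ψ(x)` extends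
analytically across `x₀` and all its odd-order derivatives of orders `1,3,…,2m−1`
vanish at `x₀`. -/
def QuasiInv (ψ : ℂ → ℂ) (x₀ : ℂ) (m : ℕ) : Prop :=
  ∃ F : ℂ → ℂ, AnalyticAt ℂ F x₀ ∧
    (∀ᶠ x in nhdsWithin x₀ {x₀}ᶜ, F x = (x - x₀) ^ m * ψ x) ∧
    ∀ j : ℕ, 1 ≤ j → j ≤ m → iteratedDeriv (2 * j - 1) F x₀ = 0

/-- `Q_κ`: Laurent polynomials `P` such that `Φ(x) = P(e^{ix})/W_{κ,a}(e^{ix})` is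
quasi-invariant at every point `x_j ∈ ℂ` with `e^{ix_j} ∈ Z_κ`, with the multiplicity of
the corresponding zero. -/
def Qka (n : ℕ) (k : Fin n → ℕ) (a : Fin n → ℂ) : Set (LaurentPolynomial ℂ) :=
  {P | ∀ x₀ : ℂ, Complex.exp (Complex.I * x₀) ∈ Zka n k a →
    QuasiInv (fun x => evalL P (Complex.exp (Complex.I * x)) /
        evalL (Wka n k a) (Complex.exp (Complex.I * x))) x₀
      (multL (Wka n k a) (Complex.exp (Complex.I * x₀)))}

/-- `Q_{κ,C}`: as `Q_κ`, but quasi-invariance is required only at real points `x_j ∈ ℝ`. -/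
def QkaC (n : ℕ) (k : Fin n → ℕ) (a : Fin n → ℂ) : Set (LaurentPolynomial ℂ) :=
  {P | ∀ x₀ : ℝ, Complex.exp (Complex.I * (x₀ : ℂ)) ∈ Zka n k a →
    QuasiInv (fun x => evalL P (Complex.exp (Complex.I * x)) /
        evalL (Wka n k a) (Complex.exp (Complex.I * x))) (x₀ : ℂ)
      (multL (Wka n k a) (Complex.exp (Complex.I * (x₀ : ℂ))))}

/-- `μ > 0` is admissible for the bilinear form if `μ ≠ |z_i|` for every zero `z_i ∈ Z_κ`. -/
def AdmMu (n : ℕ) (k : Fin n → ℕ) (a : Fin n → ℂ) (μ : ℝ) : Prop :=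
  0 < μ ∧ ∀ z ∈ Zka n k a, μ ≠ ‖z‖

/-- The complex bilinear form `(P,Q) = (1/2πi)·∮_{|z|=μ} P(z)·Q(z)·W_{κ,a}(z)^{−2}·dz/z`. -/
noncomputable def formB (n : ℕ) (k : Fin n → ℕ) (a : Fin n → ℂ) (μ : ℝ)
    (P Q : LaurentPolynomial ℂ) : ℂ :=
  (2 * Real.pi * Complex.I)⁻¹ *
    ∮ z in C(0, μ), evalL P z * evalL Q z / ((evalL (Wka n k a) z) ^ 2 * z)

/-- `μ > 0` is admissible for the Hermitian form if `1 < max(μ, 1/μ) < ν`, where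
`ν = min{|z_i| : z_i ∈ Z_κ, |z_i| > 1}` (`ν = +∞` if no such zero exists). -/
def AdmMuH (n : ℕ) (k : Fin n → ℕ) (a : Fin n → ℂ) (μ : ℝ) : Prop :=
  0 < μ ∧ 1 < max μ μ⁻¹ ∧
    ∀ z ∈ Zka n k a, 1 < ‖z‖ → max μ μ⁻¹ < ‖z‖

/-- The sesquilinear product
`⟨P,Q⟩_L = (1/2πi)·∮_{|z|=μ} P(z)·Q†(z)·(W_{κ,a}(z)·W_{κ,a}†(z))⁻¹·dz/z`. -/
noncomputable def formH (n : ℕ) (k : Fin n → ℕ) (a : Fin n → ℂ) (μ : ℝ)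
    (P Q : LaurentPolynomial ℂ) : ℂ :=
  (2 * Real.pi * Complex.I)⁻¹ *
    ∮ z in C(0, μ), evalL P z * evalL (dag Q) z /
      (evalL (Wka n k a) z * evalL (dag (Wka n k a)) z * z)

open LaurentPolynomial

lemma CT_mul (c c' : ℂ) (m m' : ℤ) :
    (C c * T m : LaurentPolynomial ℂ) * (C c' * T m') = C (c * c') * T (m + m') := by
  rw [map_mul, T_add]; ring


lemma evalL_CT (c : ℂ) (m : ℤ) (z : ℂ) : evalL (C c * T m) z = c * z ^ m := by
  rw [← single_eq_C_mul_T]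
  exact AddMonoidAlgebra.sum_single_index (by simp)

lemma evalL_add (P Q : LaurentPolynomial ℂ) (z : ℂ) :
    evalL (P + Q) z = evalL P z + evalL Q z := by
  unfold evalL; rw [AddMonoidAlgebra.coeff_add]
  exact Finsupp.sum_add_index' (by simp) (by intros; ring)

lemma evalL_zero (z : ℂ) : evalL 0 z = 0 := by
  unfold evalL; rw [AddMonoidAlgebra.coeff_zero]; exact Finsupp.sum_zero_index


lemma evalL_one (z : ℂ) : evalL 1 z = 1 := by
  have : (1 : LaurentPolynomial ℂ) = C 1 * T 0 := by simp
  rw [this, evalL_CT]; simp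

lemma evalL_mul {z : ℂ} (hz : z ≠ 0) (P Q : LaurentPolynomial ℂ) :
    evalL (P * Q) z = evalL P z * evalL Q z := by
  induction P using AddMonoidAlgebra.induction_linear with
  | zero => simp [evalL_zero, show (0 : LaurentPolynomial ℂ) * Q = 0 from zero_mul Q]
  | add f g hf hg =>
    rw [add_mul, evalL_add, evalL_add, hf, hg]; ring
  | single m c =>
    induction Q using AddMonoidAlgebra.induction_linear with
    | zero => simp [evalL_zero, show ∀ R : LaurentPolynomial ℂ, R * 0 = 0 from fun R => mul_zero R]
    | add f g hf hg => rw [mul_add, evalL_add, evalL_add, hf, hg]; ring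
    | single m' c' =>
      rw [single_eq_C_mul_T, single_eq_C_mul_T,
        CT_mul, evalL_CT, evalL_CT, evalL_CT, zpow_add₀ hz]
      ring
lemma dag_CT (c : ℂ) (m : ℤ) :
    dag (C c * T m) = C ((starRingEnd ℂ) c) * T (-m) := by
  rw [← single_eq_C_mul_T]
  exact AddMonoidAlgebra.sum_single_index (by simp)

lemma dag_add (P Q : LaurentPolynomial ℂ) : dag (P + Q) = dag P + dag Q := by
  unfold dag; rw [AddMonoidAlgebra.coeff_add]
  exact Finsupp.sum_add_index' (by simp) (by intros; rw [map_add, map_add, add_mul])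

lemma dag_zero : dag 0 = 0 := by
  unfold dag; rw [AddMonoidAlgebra.coeff_zero]; exact Finsupp.sum_zero_index

lemma dag_one : dag 1 = 1 := by
  have : (1 : LaurentPolynomial ℂ) = C 1 * T 0 := by simp
  rw [this, dag_CT]; simp

lemma dag_mul (P Q : LaurentPolynomial ℂ) : dag (P * Q) = dag P * dag Q := by
  induction P using AddMonoidAlgebra.induction_linear with
  | zero => simp [dag_zero, zero_mul]
  | add f g hf hg => rw [add_mul, dag_add, dag_add, hf, hg, add_mul]
  | single m c =>
    induction Q using AddMonoidAlgebra.induction_linear with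
    | zero => simp [dag_zero, mul_zero]
    | add f g hf hg => rw [mul_add, dag_add, dag_add, hf, hg, mul_add]
    | single m' c' =>
      rw [single_eq_C_mul_T, single_eq_C_mul_T, CT_mul, dag_CT, dag_CT, dag_CT, CT_mul,
        map_mul, neg_add]

noncomputable def dagHom : LaurentPolynomial ℂ →+* LaurentPolynomial ℂ where
  toFun := dag
  map_one' := dag_one
  map_mul' := dag_mul
  map_zero' := dag_zero
  map_add' := dag_add

lemma Dop_CT (c : ℂ) (m : ℤ) : Dop (C c * T m) = C ((m : ℂ) * c) * T m := by
  rw [← single_eq_C_mul_T]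
  exact AddMonoidAlgebra.sum_single_index (by simp)

lemma Dop_add (P Q : LaurentPolynomial ℂ) : Dop (P + Q) = Dop P + Dop Q := by
  unfold Dop; rw [AddMonoidAlgebra.coeff_add]
  exact Finsupp.sum_add_index' (by simp) (by intros; rw [mul_add, map_add, add_mul])

lemma Dop_zero : Dop 0 = 0 := by
  unfold Dop; rw [AddMonoidAlgebra.coeff_zero]; exact Finsupp.sum_zero_index

lemma Dop_neg (P : LaurentPolynomial ℂ) : Dop (-P) = -Dop P := by
  have h := Dop_add P (-P)
  simp only [add_neg_cancel, Dop_zero] at h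
  exact (neg_eq_of_add_eq_zero_right h.symm).symm

lemma dag_neg (P : LaurentPolynomial ℂ) : dag (-P) = -dag P := by
  have h := dag_add P (-P)
  simp only [add_neg_cancel, dag_zero] at h
  exact (neg_eq_of_add_eq_zero_right h.symm).symm

lemma dag_Dop (P : LaurentPolynomial ℂ) : dag (Dop P) = -Dop (dag P) := by
  induction P using AddMonoidAlgebra.induction_linear with
  | zero => simp [Dop_zero, dag_zero]
  | add f g hf hg => rw [Dop_add, dag_add, hf, hg, dag_add, Dop_add, neg_add]
  | single m c =>
    rw [single_eq_C_mul_T, Dop_CT, dag_CT, dag_CT, Dop_CT, ← neg_mul, ← map_neg C]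
    push_cast
    rw [map_mul]
    norm_num

lemma Dop_iter_neg (i : ℕ) (P : LaurentPolynomial ℂ) : Dop^[i] (-P) = -Dop^[i] P := by
  induction i generalizing P with
  | zero => simp
  | succ i ih => rw [Function.iterate_succ_apply, Dop_neg, ih, Function.iterate_succ_apply]

lemma dag_Dop_iter (i : ℕ) (P : LaurentPolynomial ℂ) :
    dag (Dop^[i] P) = (-1 : LaurentPolynomial ℂ) ^ i * Dop^[i] (dag P) := by
  induction i generalizing P with
  | zero => simp
  | succ i ih =>
    rw [Function.iterate_succ_apply, ih, dag_Dop, Dop_iter_neg, Function.iterate_succ_apply,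
      pow_succ]
    ring

lemma conj_of_abs_one {a : ℂ} (ha : ‖a‖ = 1) : (starRingEnd ℂ) a = a⁻¹ := by
  have h0 : a ≠ 0 := by intro h; rw [h] at ha; simp at ha
  field_simp
  rw [mul_comm]
  simpa [Complex.mul_conj, Complex.normSq_eq_norm_sq, ha] using by norm_num [ha]

lemma dag_Phi {a : ℂ} (ha : ‖a‖ = 1) (k : ℕ) : dag (PhiL k a) = PhiL k a := by
  have h0 : a ≠ 0 := by intro h; rw [h] at ha; simp at ha
  have h1 : (starRingEnd ℂ) a = a⁻¹ := conj_of_abs_one ha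
  have h2 : (starRingEnd ℂ) a⁻¹ = a := by
    rw [map_inv₀, h1, inv_inv]
  rw [PhiL, dag_add, dag_CT, dag_CT, h1, h2, neg_neg, add_comm]

noncomputable def epsL (n : ℕ) : LaurentPolynomial ℂ :=
  ∏ i : Fin n, (-1 : LaurentPolynomial ℂ) ^ (i : ℕ)

noncomputable def epsC (n : ℕ) : ℂ := ∏ i : Fin n, (-1 : ℂ) ^ (i : ℕ)

lemma epsC_mul_self (n : ℕ) : epsC n * epsC n = 1 := by
  rw [epsC, ← Finset.prod_mul_distrib]
  simp [← pow_add, ← two_mul, pow_mul]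

lemma epsL_eq (n : ℕ) : epsL n = C (epsC n) := by
  rw [epsL, epsC, map_prod]
  exact Finset.prod_congr rfl fun i _ => by rw [map_pow, map_neg, map_one]

lemma dag_Wka (n : ℕ) (k : Fin n → ℕ) (a : Fin n → ℂ) (ha : ∀ j, ‖a j‖ = 1) :
    dag (Wka n k a) = C (epsC n) * Wka n k a := by
  have h1 : dag (Wka n k a) = dagHom (Wka n k a) := rfl
  rw [h1, Wka, RingHom.map_det]
  have h2 : (dagHom.mapMatrix (Matrix.of fun i j : Fin n => Dop^[(i : ℕ)] (PhiL (k j) (a j))))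
      = Matrix.of (fun i j : Fin n =>
          ((-1 : LaurentPolynomial ℂ) ^ (i : ℕ)) * Dop^[(i : ℕ)] (PhiL (k j) (a j))) :=
    Matrix.ext fun i j => by
      simp only [RingHom.mapMatrix_apply, Matrix.map_apply, Matrix.of_apply]
      show dag (Dop^[(i : ℕ)] (PhiL (k j) (a j))) = _
      rw [dag_Dop_iter, dag_Phi (ha j)]
  rw [h2]
  refine (Matrix.det_mul_column (fun i : Fin n => (-1 : LaurentPolynomial ℂ) ^ (i : ℕ))
    (Matrix.of fun i j : Fin n => Dop^[(i : ℕ)] (PhiL (k j) (a j)))).trans ?_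
  rw [← epsL, epsL_eq]

lemma evalL_dag {z : ℂ} (hz : z ≠ 0) (P : LaurentPolynomial ℂ) :
    evalL (dag P) z = (starRingEnd ℂ) (evalL P (((starRingEnd ℂ) z)⁻¹)) := by
  induction P using AddMonoidAlgebra.induction_linear with
  | zero => rw [dag_zero]; simp [evalL_zero]
  | add f g hf hg => rw [dag_add, evalL_add, evalL_add, map_add, hf, hg]
  | single m c =>
    rw [single_eq_C_mul_T, dag_CT, evalL_CT, evalL_CT, map_mul]
    congr 1
    rw [map_zpow₀, map_inv₀, Complex.conj_conj, inv_zpow, ← zpow_neg]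

lemma evalL_toLaurent (f : Polynomial ℂ) (z : ℂ) :
    evalL (Polynomial.toLaurent f) z = Polynomial.eval z f := by
  induction f using Polynomial.induction_on' with
  | add p q hp hq => rw [map_add, evalL_add, hp, hq, Polynomial.eval_add]
  | monomial n a =>
    rw [Polynomial.toLaurent_C_mul_T, evalL_CT, Polynomial.eval_monomial, zpow_natCast]

lemma epsC_ne_zero (n : ℕ) : epsC n ≠ 0 :=
  fun h => by simpa [h] using epsC_mul_self n

lemma Wka_ne_zero {n : ℕ} {k : Fin n → ℕ} {a : Fin n → ℂ} {μ : ℝ}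
    (hμ : AdmMuH n k a μ) : Wka n k a ≠ 0 := by
  intro h
  have h1 : (1 : ℝ) < max μ μ⁻¹ := hμ.2.1
  set z : ℂ := ((max μ μ⁻¹ : ℝ) : ℂ) with hzdef
  have habs : ‖z‖ = max μ μ⁻¹ := by
    rw [hzdef, Complex.norm_real, Real.norm_eq_abs, abs_of_pos (by linarith)]
  have hz0 : z ≠ 0 := by
    intro h0
    rw [h0] at habs; simp at habs; linarith
  have := hμ.2.2 z ⟨hz0, by rw [h, evalL_zero]⟩ (by rw [habs]; exact h1)
  rw [habs] at this
  exact lt_irrefl _ this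

lemma symm_zero {n : ℕ} {k : Fin n → ℕ} {a : Fin n → ℂ} (ha : ∀ j, ‖a j‖ = 1)
    {z : ℂ} (hz : z ≠ 0) (h0 : evalL (Wka n k a) z = 0) :
    evalL (Wka n k a) (((starRingEnd ℂ) z)⁻¹) = 0 := by
  set w : ℂ := ((starRingEnd ℂ) z)⁻¹ with hw
  have hw0 : w ≠ 0 := by
    simp [hw, hz]
  have h2 : ((starRingEnd ℂ) w)⁻¹ = z := by
    rw [hw, map_inv₀, Complex.conj_conj, inv_inv]
  have h3 : evalL (dag (Wka n k a)) w = 0 := by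
    rw [evalL_dag hw0, h2, h0, map_zero]
  rw [dag_Wka n k a ha] at h3
  have h4 : evalL (LaurentPolynomial.C (epsC n) * Wka n k a) w
      = epsC n * evalL (Wka n k a) w := by
    have : (LaurentPolynomial.C (epsC n) : LaurentPolynomial ℂ)
        = LaurentPolynomial.C (epsC n) * LaurentPolynomial.T 0 := by simp
    rw [evalL_mul hw0, this, evalL_CT]; simp
  rw [h4] at h3
  exact (mul_eq_zero.mp h3).resolve_left (epsC_ne_zero n)

lemma circle_nonvanish {n : ℕ} {k : Fin n → ℕ} {a : Fin n → ℂ} {μ : ℝ}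
    (ha : ∀ j, ‖a j‖ = 1) (hμ : AdmMuH n k a μ) :
    ∀ z : ℂ, ‖z‖ = μ → evalL (Wka n k a) z ≠ 0 := by
  intro z hzμ h0
  have hμ0 : 0 < μ := hμ.1
  have hmax : (1 : ℝ) < max μ μ⁻¹ := hμ.2.1
  have hz0 : z ≠ 0 := by
    intro h; rw [h] at hzμ; simp at hzμ; linarith
  rcases lt_trichotomy μ 1 with hlt | heq | hgt
  · set w : ℂ := ((starRingEnd ℂ) z)⁻¹ with hw
    have hw0 : w ≠ 0 := by simp [hw, hz0]
    have hwabs : ‖w‖ = μ⁻¹ := by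
      rw [hw, norm_inv, Complex.norm_conj, hzμ]
    have hWw : evalL (Wka n k a) w = 0 := symm_zero ha hz0 h0
    have h1w : (1 : ℝ) < ‖w‖ := by
      rw [hwabs]; exact (one_lt_inv₀ hμ0).mpr hlt
    have := hμ.2.2 w ⟨hw0, hWw⟩ h1w
    rw [hwabs] at this
    exact absurd this (not_lt.mpr (le_max_right _ _))
  · rw [heq] at hmax; simp at hmax
  · have h1z : (1 : ℝ) < ‖z‖ := by rw [hzμ]; exact hgt
    have := hμ.2.2 z ⟨hz0, h0⟩ h1z
    rw [hzμ] at this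
    exact absurd this (not_lt.mpr (le_max_left _ _))

lemma analyticAt_deriv' {g : ℂ → ℂ} {x : ℂ} (h : AnalyticAt ℂ g x) :
    AnalyticAt ℂ (deriv g) x := by
  obtain ⟨s, hs, hg⟩ := h.eventually_analyticAt.exists_mem
  exact (AnalyticOnNhd.deriv fun y hy => hg y hy) x (mem_of_mem_nhds hs)

lemma key_iter (x₀ : ℂ) : ∀ (r N : ℕ) (g : ℂ → ℂ), AnalyticAt ℂ g x₀ → r < N →
    iteratedDeriv r (fun x => (x - x₀) ^ N * g x) x₀ = 0 := by
  intro r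
  induction r with
  | zero =>
    intro N g _ hN
    rw [iteratedDeriv_zero]
    simp only [sub_self]
    rw [zero_pow (by omega), zero_mul]
  | succ r ih =>
    intro N g hg hN
    obtain ⟨M, rfl⟩ : ∃ M, N = M + 1 := ⟨N - 1, by omega⟩
    rw [iteratedDeriv_succ']
    have hg' : AnalyticAt ℂ (deriv g) x₀ := analyticAt_deriv' hg
    have heq : deriv (fun x => (x - x₀) ^ (M + 1) * g x) =ᶠ[nhds x₀]
        fun x => (x - x₀) ^ M * (((M : ℂ) + 1) * g x + (x - x₀) * deriv g x) := by
      filter_upwards [hg.eventually_analyticAt] with y hy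
      have hd1 : HasDerivAt (fun x : ℂ => (x - x₀) ^ (M + 1))
          ((((M : ℕ) + 1 : ℕ) : ℂ) * (y - x₀) ^ M * 1) y :=
        ((hasDerivAt_id y).sub_const x₀).pow (M + 1)
      have hd2 : HasDerivAt g (deriv g y) y := hy.differentiableAt.hasDerivAt
      rw [show deriv (fun x => (x - x₀) ^ (M + 1) * g x) y = _ from (hd1.mul hd2).deriv]
      push_cast
      ring
    rw [heq.iteratedDeriv_eq r]
    refine ih M _ ?_ (by omega)
    exact (analyticAt_const.mul hg).add
      (((analyticAt_id).sub analyticAt_const).mul hg')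

lemma diffable_evalL_exp (P : LaurentPolynomial ℂ) :
    Differentiable ℂ (fun x : ℂ => evalL P (Complex.exp (Complex.I * x))) := by
  have hrw : (fun x : ℂ => evalL P (Complex.exp (Complex.I * x)))
      = fun x => ∑ m ∈ P.coeff.support, P.coeff m * Complex.exp (Complex.I * x) ^ m := rfl
  rw [hrw]
  apply Differentiable.fun_sum
  intro m _
  apply Differentiable.const_mul
  intro x
  apply DifferentiableAt.zpow
  · exact (Complex.differentiable_exp.comp
      ((differentiable_const _).mul differentiable_id)).differentiableAt
  · exact Or.inl (Complex.exp_ne_zero _)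

lemma analytic_evalL_exp (P : LaurentPolynomial ℂ) (x₀ : ℂ) :
    AnalyticAt ℂ (fun x : ℂ => evalL P (Complex.exp (Complex.I * x))) x₀ :=
  (diffable_evalL_exp P).analyticAt x₀

lemma exp_ne_of_ball {x₀ x : ℂ} (hb : x ∈ Metric.ball x₀ (2 * Real.pi)) (hne : x ≠ x₀) :
    Complex.exp (Complex.I * x) ≠ Complex.exp (Complex.I * x₀) := by
  intro hcontra
  obtain ⟨nn, hnn⟩ := Complex.exp_eq_exp_iff_exists_int.mp hcontra
  have hx : x - x₀ = (nn : ℂ) * (2 * Real.pi) := by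
    apply mul_left_cancel₀ Complex.I_ne_zero
    push_cast at hnn ⊢
    linear_combination hnn
  have hnn0 : nn ≠ 0 := by
    intro h0
    rw [h0] at hx
    simp at hx
    exact hne (sub_eq_zero.mp hx)
  have hdist : dist x x₀ = ‖((nn : ℂ) * (2 * Real.pi))‖ := by
    rw [Complex.dist_eq, hx]
  rw [Metric.mem_ball, hdist] at hb
  have h2pi : (0 : ℝ) < 2 * Real.pi := by positivity
  have : (2 * Real.pi) ≤ ‖((nn : ℂ) * (2 * Real.pi))‖ := by
    rw [show ((nn : ℂ) * (2 * Real.pi) : ℂ) = (((nn : ℝ) * (2 * Real.pi) : ℝ) : ℂ) by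
      push_cast; ring]
    rw [Complex.norm_real, Real.norm_eq_abs, abs_mul, abs_of_pos h2pi]
    have h1 : (1 : ℝ) ≤ |(nn : ℝ)| := by
      rw [← Int.cast_abs]
      exact_mod_cast Int.one_le_abs hnn0
    nlinarith
  linarith

lemma evalL_T (m : ℤ) (z : ℂ) : evalL (LaurentPolynomial.T m) z = z ^ m := by
  rw [show (LaurentPolynomial.T m : LaurentPolynomial ℂ) = C 1 * T m by simp,
    evalL_CT, one_mul]

lemma factor_exp_sub (x₀ : ℂ) :
    ∃ (nn : ℕ) (v : ℂ → ℂ), 1 ≤ nn ∧ AnalyticAt ℂ v x₀ ∧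
      ∀ᶠ x in nhds x₀, Complex.exp (Complex.I * x) - Complex.exp (Complex.I * x₀)
        = (x - x₀) ^ nn * v x := by
  set e' : ℂ → ℂ :=
    fun x => Complex.exp (Complex.I * x) - Complex.exp (Complex.I * x₀) with he'
  have hd : Differentiable ℂ e' := (Complex.differentiable_exp.comp
    ((differentiable_const _).mul differentiable_id)).sub_const _
  have ha : AnalyticAt ℂ e' x₀ := hd.analyticAt x₀
  have hne : ∀ᶠ x in nhdsWithin x₀ {x₀}ᶜ, e' x ≠ 0 := by
    have hball : Metric.ball x₀ (2 * Real.pi) ∈ nhdsWithin x₀ {x₀}ᶜ :=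
      nhdsWithin_le_nhds (Metric.ball_mem_nhds _ (by positivity))
    filter_upwards [hball, self_mem_nhdsWithin] with x hb hx
    exact sub_ne_zero.mpr (exp_ne_of_ball hb hx)
  have htop : (analyticOrderAt e' x₀) ≠ ⊤ := by
    intro h
    have h0 := (analyticOrderAt_eq_top (f := e') (z₀ := x₀)).mp h
    have h1 : ∀ᶠ x in nhdsWithin x₀ {x₀}ᶜ, e' x = 0 := h0.filter_mono nhdsWithin_le_nhds
    obtain ⟨x, hx1, hx2⟩ := (h1.and hne).exists
    exact hx2 hx1
  have horder : (analyticOrderAt e' x₀) = (((analyticOrderAt e' x₀).toNat : ℕ) : ℕ∞) := (ENat.coe_toNat htop).symm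
  obtain ⟨v, hva, hv0, hev⟩ := (ha.analyticOrderAt_eq_natCast).mp horder
  refine ⟨(analyticOrderAt e' x₀).toNat, v, ?_, hva, by simpa [smul_eq_mul] using hev⟩
  by_contra h
  have hnn : (analyticOrderAt e' x₀).toNat = 0 := by omega
  have hx₀ : e' x₀ = (x₀ - x₀) ^ (analyticOrderAt e' x₀).toNat • v x₀ := hev.self_of_nhds
  rw [hnn] at hx₀
  simp at hx₀
  have hzero : e' x₀ = 0 := sub_self _
  rw [hzero] at hx₀
  exact hv0 hx₀.symm

lemma Qsq_mem {n : ℕ} {k : Fin n → ℕ} {a : Fin n → ℂ} (ha : ∀ j, ‖a j‖ = 1)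
    (hWne : Wka n k a ≠ 0) (l : ℤ) :
    Wka n k a * Wka n k a * LaurentPolynomial.T l ∈ Qka n k a := by
  intro x₀ hx₀
  obtain ⟨hz₀, hW₀⟩ := hx₀
  set W := Wka n k a with hWdef
  set z₀ := Complex.exp (Complex.I * x₀) with hz₀def
  set d := W.exists_T_pow.choose with hd
  set f' := W.exists_T_pow.choose_spec.choose with hf'
  have hspec : Polynomial.toLaurent f' = W * T d := W.exists_T_pow.choose_spec.choose_spec
  have hm : multL W z₀ = Polynomial.rootMultiplicity z₀ f' := rfl
  have hfne : f' ≠ 0 := by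
    intro h
    apply hWne
    have h2 : Polynomial.toLaurent f' = 0 := by rw [h, map_zero]
    rw [hspec] at h2
    have h3 := congrArg (· * T (-(d : ℤ))) h2
    simpa using h3
  have hEval : ∀ z : ℂ, z ≠ 0 → Polynomial.eval z f' = evalL W z * z ^ (d : ℤ) := by
    intro z hz
    rw [← evalL_toLaurent, hspec, evalL_mul hz, evalL_T]
  set m₀ := Polynomial.rootMultiplicity z₀ f' with hm₀
  set g := f' /ₘ (Polynomial.X - Polynomial.C z₀) ^ m₀ with hgdef
  have hfg : (Polynomial.X - Polynomial.C z₀) ^ m₀ * g = f' :=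
    Polynomial.pow_mul_divByMonic_rootMultiplicity_eq f' z₀
  have hg0 : Polynomial.eval z₀ g ≠ 0 :=
    Polynomial.eval_divByMonic_pow_rootMultiplicity_ne_zero z₀ hfne
  set e : ℂ → ℂ := fun x => Complex.exp (Complex.I * x) with he
  have hex : ∀ x : ℂ, e x ≠ 0 := fun x => Complex.exp_ne_zero _
  set H : ℂ → ℂ := fun x => Polynomial.eval (e x) g * (e x) ^ (l - (d : ℤ)) with hH
  set G : ℂ → ℂ := fun x => evalL (W * T l) (e x) with hG
  have hGdiff : Differentiable ℂ G := diffable_evalL_exp (W * T l)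
  have hHdiff : Differentiable ℂ H := by
    apply Differentiable.mul
    · exact (g.differentiable).comp (Complex.differentiable_exp.comp
        ((differentiable_const _).mul differentiable_id))
    · intro x
      exact DifferentiableAt.zpow ((Complex.differentiable_exp.comp
        ((differentiable_const _).mul differentiable_id)).differentiableAt)
        (Or.inl (hex x))
  have hGH : ∀ x, G x = (e x - z₀) ^ m₀ * H x := by
    intro x
    have h2 := hEval (e x) (hex x)
    have h3 : Polynomial.eval (e x) f' = (e x - z₀) ^ m₀ * Polynomial.eval (e x) g := by
      rw [← hfg, Polynomial.eval_mul, Polynomial.eval_pow]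
      simp
    have hzl : evalL (W * T l) (e x) = evalL W (e x) * (e x) ^ l := by
      rw [evalL_mul (hex x), evalL_T]
    apply mul_right_cancel₀ (zpow_ne_zero (d : ℤ) (hex x))
    show evalL (W * T l) (e x) * (e x) ^ (d : ℤ)
        = (e x - z₀) ^ m₀ * H x * (e x) ^ (d : ℤ)
    rw [hzl]
    calc evalL W (e x) * (e x) ^ l * (e x) ^ (d : ℤ)
        = (evalL W (e x) * (e x) ^ (d : ℤ)) * (e x) ^ l := by ring
      _ = Polynomial.eval (e x) f' * (e x) ^ l := by rw [← h2]
      _ = (e x - z₀) ^ m₀ * Polynomial.eval (e x) g * (e x) ^ l := by rw [h3]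
      _ = (e x - z₀) ^ m₀ * (Polynomial.eval (e x) g * (e x) ^ (l - (d : ℤ))) *
            (e x) ^ (d : ℤ) := by
          rw [mul_assoc, mul_assoc, mul_assoc, ← zpow_add₀ (hex x)]
          ring_nf
      _ = (e x - z₀) ^ m₀ * H x * (e x) ^ (d : ℤ) := rfl
  have hWevent : ∀ᶠ x in nhdsWithin x₀ {x₀}ᶜ, evalL W (e x) ≠ 0 := by
    have hball : Metric.ball x₀ (2 * Real.pi) ∈ nhdsWithin x₀ {x₀}ᶜ :=
      nhdsWithin_le_nhds (Metric.ball_mem_nhds _ (by positivity))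
    have hcont : ∀ᶠ x in nhdsWithin x₀ {x₀}ᶜ, Polynomial.eval (e x) g ≠ 0 := by
      apply nhdsWithin_le_nhds
      have hc : ContinuousAt (fun x => Polynomial.eval (e x) g) x₀ :=
        ((g.differentiable).comp (Complex.differentiable_exp.comp
          ((differentiable_const _).mul differentiable_id))).continuous.continuousAt
      exact hc.eventually_ne (by simpa [he] using hg0)
    filter_upwards [hball, hcont, self_mem_nhdsWithin] with x hb hgx hxne
    intro hWx
    have hfx : Polynomial.eval (e x) f' = 0 := by
      rw [hEval (e x) (hex x), hWx, zero_mul]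
    rw [← hfg, Polynomial.eval_mul, Polynomial.eval_pow] at hfx
    rcases mul_eq_zero.mp hfx with h1 | h2
    · have h1' := pow_eq_zero_iff'.mp h1
      rw [Polynomial.eval_sub, Polynomial.eval_X, Polynomial.eval_C] at h1'
      exact (exp_ne_of_ball hb hxne) (sub_eq_zero.mp h1'.1)
    · exact hgx h2
  rw [show multL W (Complex.exp (Complex.I * x₀)) = m₀ from hm]
  refine ⟨fun x => (x - x₀) ^ m₀ * G x, ?_, ?_, ?_⟩
  · exact (((analyticAt_id).sub analyticAt_const).pow m₀).mul (hGdiff.analyticAt x₀)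
  · filter_upwards [hWevent] with x hWx
    have hsplit : evalL (W * W * T l) (e x) = evalL W (e x) * evalL (W * T l) (e x) := by
      rw [evalL_mul (hex x), evalL_mul (hex x), evalL_mul (hex x)]
      ring
    have hdiv : evalL (W * W * T l) (e x) / evalL W (e x) = G x := by
      rw [hsplit, mul_div_cancel_left₀ _ hWx]
    show (x - x₀) ^ m₀ * G x = _
    rw [hdiv]
  · intro j hj1 hjm
    obtain ⟨nn, v, hnn1, hva, hev⟩ := factor_exp_sub x₀
    have hm₀pos : 1 ≤ m₀ := by
      have hroot : Polynomial.IsRoot f' z₀ := by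
        show Polynomial.eval z₀ f' = 0
        rw [hEval z₀ hz₀, hW₀, zero_mul]
      exact (Polynomial.rootMultiplicity_pos hfne).mpr hroot
    have hFeq : (fun x => (x - x₀) ^ m₀ * G x) =ᶠ[nhds x₀]
        fun x => (x - x₀) ^ (m₀ + nn * m₀) * (v x ^ m₀ * H x) := by
      filter_upwards [hev] with x hx
      rw [hGH x, hx, mul_pow, ← pow_mul, pow_add]
      ring
    rw [hFeq.iteratedDeriv_eq]
    apply key_iter x₀ _ _ _ ((hva.pow m₀).mul (hHdiff.analyticAt x₀))
    have h2 : m₀ ≤ nn * m₀ := Nat.le_mul_of_pos_left m₀ (by omega)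
    omega

lemma evalL_C_mul {z : ℂ} (hz : z ≠ 0) (c : ℂ) (P : LaurentPolynomial ℂ) :
    evalL (C c * P) z = c * evalL P z := by
  rw [evalL_mul hz, show (C c : LaurentPolynomial ℂ) = C c * T 0 by simp, evalL_CT]
  simp

lemma circleIntegral_zpow {μ : ℝ} (hμ : 0 < μ) (nn : ℤ) :
    (∮ z in C(0, μ), z ^ nn) = if nn = -1 then 2 * Real.pi * Complex.I else 0 := by
  by_cases h : nn = -1
  · subst h
    rw [show (fun z : ℂ => z ^ (-1 : ℤ)) = fun z => (z - 0)⁻¹ by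
      funext z; rw [zpow_neg_one, sub_zero]]
    rw [circleIntegral.integral_sub_inv_of_mem_ball (Metric.mem_ball_self hμ)]
    simp
  · have h2 := circleIntegral.integral_sub_zpow_of_ne h 0 0 μ
    simp only [sub_zero] at h2
    rw [h2, if_neg h]

lemma circleIntegral_monomial {μ : ℝ} (hμ : 0 < μ) (c : ℂ) (nn : ℤ) :
    (∮ z in C(0, μ), c * z ^ nn) = c * if nn = -1 then 2 * Real.pi * Complex.I else 0 := by
  rw [show (fun z : ℂ => c * z ^ nn) = fun z => c • (z ^ nn) by funext z; simp]
  rw [circleIntegral.integral_smul, circleIntegral_zpow hμ, smul_eq_mul]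

lemma circleIntegral_msum {μ : ℝ} (hμ : 0 < μ) (s : Finset ℤ) (co : ℤ → ℂ) (l : ℤ) :
    (∮ z in C(0, μ), ∑ m ∈ s, co m * z ^ (m - l - 1))
      = ∑ m ∈ s, co m * if m = l then 2 * Real.pi * Complex.I else 0 := by
  have hint : ∀ m ∈ s, IntervalIntegrable
      (fun θ : ℝ => deriv (circleMap 0 μ) θ • (co m * circleMap 0 μ θ ^ (m - l - 1)))
      MeasureTheory.volume 0 (2 * Real.pi) := by
    intro m _
    apply Continuous.intervalIntegrable
    apply Continuous.fun_smul
    · have : (fun θ : ℝ => deriv (circleMap 0 μ) θ)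
          = fun θ => circleMap 0 μ θ * Complex.I := by
        funext θ; rw [deriv_circleMap]
      rw [show deriv (circleMap 0 μ) = fun θ => circleMap 0 μ θ * Complex.I from this]
      exact (continuous_circleMap 0 μ).mul continuous_const
    · exact continuous_const.mul ((continuous_circleMap 0 μ).zpow₀ _
        fun θ => Or.inl (circleMap_ne_center hμ.ne' ))
  calc (∮ z in C(0, μ), ∑ m ∈ s, co m * z ^ (m - l - 1))
      = ∫ θ in (0:ℝ)..(2 * Real.pi), ∑ m ∈ s,
          deriv (circleMap 0 μ) θ • (co m * circleMap 0 μ θ ^ (m - l - 1)) := by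
        simp only [circleIntegral, smul_eq_mul, Finset.mul_sum]
    _ = ∑ m ∈ s, ∫ θ in (0:ℝ)..(2 * Real.pi),
          deriv (circleMap 0 μ) θ • (co m * circleMap 0 μ θ ^ (m - l - 1)) :=
        intervalIntegral.integral_finset_sum hint
    _ = ∑ m ∈ s, (∮ z in C(0, μ), co m * z ^ (m - l - 1)) := rfl
    _ = ∑ m ∈ s, co m * if m = l then 2 * Real.pi * Complex.I else 0 := by
        refine Finset.sum_congr rfl fun m _ => ?_
        rw [circleIntegral_monomial hμ]
        congr 1
        by_cases h : m = l
        · rw [if_pos h, if_pos (by omega)]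
        · rw [if_neg h, if_neg (by omega)]

lemma dag_T (l : ℤ) : dag (T l) = T (-l) := by
  rw [show (T l : LaurentPolynomial ℂ) = C 1 * T l by simp, dag_CT]
  simp

lemma formH_pick {n : ℕ} {k : Fin n → ℕ} {a : Fin n → ℂ} {μ : ℝ}
    (ha : ∀ j, ‖a j‖ = 1) (hμ : AdmMuH n k a μ) (P : LaurentPolynomial ℂ)
    (l : ℤ) :
    formH n k a μ P (Wka n k a * Wka n k a * LaurentPolynomial.T l) = epsC n * P.coeff l := by
  set W := Wka n k a with hW
  have hμ0 : 0 < μ := hμ.1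
  have hdagQ : dag (W * W * T l) = W * W * T (-l) := by
    rw [dag_mul, dag_mul, dag_T, dag_Wka n k a ha]
    have hh : (C (epsC n) * W) * (C (epsC n) * W) * T (-l)
        = C (epsC n * epsC n) * (W * W * T (-l)) := by
      rw [map_mul]; ring
    rw [hh, epsC_mul_self, map_one, one_mul]
  have hcong : Set.EqOn
      (fun z => evalL P z * evalL (dag (W * W * T l)) z /
        (evalL W z * evalL (dag W) z * z))
      (fun z => ∑ m ∈ P.coeff.support, (epsC n * P.coeff m) * z ^ (m - l - 1))
      (Metric.sphere 0 μ) := by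
    intro z hzs
    have habs : ‖z‖ = μ := by simpa [Complex.dist_eq] using hzs
    have hz0 : z ≠ 0 := by
      intro h; rw [h] at habs; simp at habs; linarith [hμ0]
    have hwz : evalL W z ≠ 0 := circle_nonvanish ha hμ z habs
    have h1 : evalL (dag (W * W * T l)) z = evalL W z * evalL W z * z ^ (-l) := by
      rw [hdagQ, evalL_mul hz0, evalL_mul hz0, evalL_T]
    have h2 : evalL (dag W) z = epsC n * evalL W z := by
      rw [dag_Wka n k a ha, evalL_C_mul hz0]
    simp only
    rw [h1, h2]
    have hsum : (∑ m ∈ P.coeff.support, (epsC n * P.coeff m) * z ^ (m - l - 1))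
        = epsC n * (evalL P z * z ^ (-l - 1)) := by
      have hps : evalL P z = ∑ m ∈ P.coeff.support, P.coeff m * z ^ m := rfl
      rw [hps, Finset.sum_mul, Finset.mul_sum]
      refine Finset.sum_congr rfl fun m _ => ?_
      rw [show m - l - 1 = m + (-l - 1) from by ring, zpow_add₀ hz0]
      ring
    rw [hsum]
    rw [div_eq_iff (mul_ne_zero (mul_ne_zero hwz
      (mul_ne_zero (epsC_ne_zero n) hwz)) hz0)]
    have hz1 : z ^ (-l - 1) * z = z ^ (-l) := by
      rw [← zpow_add_one₀ hz0]
      congr 1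
      ring
    have hre : epsC n * (evalL P z * z ^ (-l - 1)) * (evalL W z * (epsC n * evalL W z) * z)
        = (epsC n * epsC n) * (evalL P z * (evalL W z * evalL W z)) *
            (z ^ (-l - 1) * z) := by ring
    rw [hre, epsC_mul_self, hz1, one_mul]
    ring
  unfold formH
  rw [circleIntegral.integral_congr (le_of_lt hμ0) hcong]
  rw [circleIntegral_msum hμ0]
  have hsum2 : (∑ m ∈ P.coeff.support, (epsC n * P.coeff m) *
        if m = l then 2 * (Real.pi : ℂ) * Complex.I else 0)
      = epsC n * P.coeff l * (2 * (Real.pi : ℂ) * Complex.I) := by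
    by_cases hl : l ∈ P.coeff.support
    · rw [Finset.sum_eq_single_of_mem l hl (fun b _ hb => by rw [if_neg hb, mul_zero]),
        if_pos rfl]
    · have hPl : P.coeff l = 0 := Finsupp.notMem_support_iff.mp hl
      rw [hPl, mul_zero, zero_mul]
      apply Finset.sum_eq_zero
      intro m hm
      rw [if_neg (by rintro rfl; exact hl hm), mul_zero]
  rw [hsum2]
  have h2pi : ((2 * (Real.pi : ℂ) * Complex.I : ℂ)) ≠ 0 := by
    simp [Real.pi_ne_zero, Complex.I_ne_zero]
  field_simp
/-- assuming `|a_j| = 1` for all `j`, the subspace `Q_κ` is dense in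
`Q_{κ,C}` with respect to `⟨·,·⟩_L`: if `P ∈ Q_{κ,C}` is orthogonal to every `Q ∈ Q_κ`,
then `P = 0`. -/
theorem stmt_19 (n : ℕ) (k : Fin n → ℕ) (hk : StrictAnti k) (hkpos : ∀ j, 0 < k j)
    (a : Fin n → ℂ) (ha : ∀ j, ‖a j‖ = 1)
    (P : LaurentPolynomial ℂ) (hP : P ∈ QkaC n k a) (μ : ℝ) (hμ : AdmMuH n k a μ)
    (horth : ∀ Q ∈ Qka n k a, formH n k a μ P Q = 0) :
    P = 0 := by
  have hWne : Wka n k a ≠ 0 := Wka_ne_zero hμ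
  have key : ∀ l : ℤ, P.coeff l = 0 := by
    intro l
    have h0 := horth _ (Qsq_mem ha hWne l)
    rw [formH_pick ha hμ P l] at h0
    rcases mul_eq_zero.mp h0 with h | h
    · exact absurd h (epsC_ne_zero n)
    · exact h
  exact LaurentPolynomial.ext fun m => by rw [key m]; rfl
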